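/- arXiv:2102.09865 — 3 statements merged into one kernel-verified Lean document; each statement's English description precedes it below -/
import Mathlib

section
/- For all integers m, n > 0, every l ∈ ℤ and every x ∈ M_l, one has e^m f^n(x) = Σ_{r=0}^{min(m,n)} ([m]!·[n]!/([m−r]!·[n−r]!)) · qbinom(l+m−n, r) · f^{n−r} e^{m−r}(x). -/
/-!
Work in `𝒵 = ℤ[v,v⁻¹] ⊆ 𝒬 = ℚ(v)` (realized inside `RatFunc ℚ`, with `v = RatFunc.X`).
`qint n = [n]`, `qfact r = [r]!`, `qbinom n r` the quantum binomial coefficient.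

Let `M = ⊕_{l∈ℤ} M_l` be a ℤ-graded `ℚ(v)`-vector space and `e f : M → M` linear maps
with `e(M_l) ⊆ M_{l+2}`, `f(M_l) ⊆ M_{l−2}` and `(e∘f − f∘e)(x) = [l]·x` on `M_l`.

STATEMENT: for integers `m, n > 0`, `l : ℤ` and `x ∈ M_l`,
`e^m f^n(x) = Σ_{r=0}^{min(m,n)} ([m]!·[n]!/([m−r]!·[n−r]!)) · qbinom(l+m−n, r) · f^{n−r} e^{m−r}(x)`.
-/

noncomputable section

/-- The quantum integer `[n] = (vⁿ − v⁻ⁿ)/(v − v⁻¹)` in `ℚ(v)`. -/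
def qint (n : ℤ) : RatFunc ℚ :=
  (RatFunc.X ^ n - RatFunc.X ^ (-n)) / (RatFunc.X - RatFunc.X⁻¹)

/-- The quantum factorial `[r]! = [1][2]⋯[r]`. -/
def qfact (r : ℕ) : RatFunc ℚ := ∏ i ∈ Finset.range r, qint ((i : ℤ) + 1)

/-- The quantum binomial coefficient `qbinom(n,r) = ([n][n−1]⋯[n−r+1])/[r]!`. -/
def qbinom (n : ℤ) (r : ℕ) : RatFunc ℚ :=
  (∏ i ∈ Finset.range r, qint (n - (i : ℤ))) / qfact r

abbrev V : RatFunc ℚ := RatFunc.X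

lemma V_ne : (V : RatFunc ℚ) ≠ 0 := RatFunc.X_ne_zero

lemma pow_X_ne_one (k : ℕ) (hk : k ≠ 0) : (V:RatFunc ℚ)^k ≠ 1 := by
  intro h
  have h2 : (algebraMap (Polynomial ℚ) (RatFunc ℚ)) (Polynomial.X ^ k) =
      (algebraMap (Polynomial ℚ) (RatFunc ℚ)) 1 := by
    simpa [map_pow, RatFunc.algebraMap_X] using h
  have := RatFunc.algebraMap_injective ℚ h2
  have := congrArg Polynomial.natDegree this
  simp [Polynomial.natDegree_X_pow] at this
  exact hk this

lemma w_ne : (V : RatFunc ℚ) - V⁻¹ ≠ 0 := by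
  intro h
  have hx : (V:RatFunc ℚ) = V⁻¹ := by linear_combination h
  have : (V:RatFunc ℚ)^2 = 1 := by
    have := congrArg (· * V) hx
    simpa [pow_two, inv_mul_cancel₀ V_ne] using this
  exact pow_X_ne_one 2 (by norm_num) this

lemma qint_zero : qint 0 = 0 := by simp [qint]

lemma qint_one : qint 1 = 1 := by
  simp only [qint]
  rw [zpow_one, zpow_neg, zpow_one, div_self w_ne]

lemma qint_neg (n : ℤ) : qint (-n) = - qint n := by
  simp only [qint, neg_neg]
  ring

lemma qint_num (n : ℤ) : qint n * (V - V⁻¹) = V^n - V^(-n) := by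
  exact div_mul_cancel₀ _ w_ne

lemma qint_add (a b : ℤ) : qint (a+b) = V^a * qint b + V^(-b) * qint a := by
  have h : (V^(a+b) - V^(-(a+b))) = V^a * (V^b - V^(-b)) + V^(-b)*(V^a - V^(-a)) := by
    rw [zpow_add₀ V_ne, neg_add, zpow_add₀ V_ne]
    ring
  simp only [qint, ← mul_div_assoc, ← mul_sub] at *
  rw [← add_div, ← h]

lemma qint_ne_zero (s : ℕ) : qint ((s:ℤ)+1) ≠ 0 := by
  have hk : ((s:ℤ)+1) = ((s+1 : ℕ) : ℤ) := by push_cast; ring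
  rw [hk]
  simp only [qint]
  apply div_ne_zero _ w_ne
  intro h
  have h1 : (V:RatFunc ℚ)^((s+1:ℕ):ℤ) = V^(-((s+1:ℕ):ℤ)) := by linear_combination h
  have h2 : (V:RatFunc ℚ)^((s+1)+(s+1) : ℕ) = 1 := by
    have := congrArg (· * V^((s+1:ℕ):ℤ)) h1
    simp only [← zpow_add₀ V_ne, neg_add_cancel, zpow_zero] at this
    rw [show ((s+1:ℕ):ℤ) + ((s+1:ℕ):ℤ) = ((s+1+(s+1):ℕ):ℤ) by push_cast; ring, zpow_natCast] at this
    exact this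
  exact pow_X_ne_one _ (by omega) h2

lemma zpid (a b : ℤ) : (V^(a+1) - V^(-(a+1)))*(V^b - V^(-b)) - (V^(a+b) - V^(-(a+b)))*(V-V⁻¹) - (V^a - V^(-a))*(V^(b-1) - V^(-(b-1))) = 0 := by
  simp only [neg_add, neg_sub, zpow_add₀ V_ne, zpow_sub₀ V_ne, zpow_one, zpow_neg]
  field_simp
  ring

lemma qint_succ_mul (a b : ℤ) : qint (a+1) * qint b = qint (a+b) + qint a * qint (b-1) := by
  have h2 : (qint (a+1) * qint b - qint (a+b) - qint a * qint (b-1)) * ((V-V⁻¹)*(V-V⁻¹)) = 0 := by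
    have h : (qint (a+1) * qint b - qint (a+b) - qint a * qint (b-1)) * ((V-V⁻¹)*(V-V⁻¹))
        = (qint (a+1)*(V-V⁻¹)) * (qint b*(V-V⁻¹)) - (qint (a+b)*(V-V⁻¹))*(V-V⁻¹)
          - (qint a*(V-V⁻¹)) * (qint (b-1)*(V-V⁻¹)) := by ring
    rw [h, qint_num, qint_num, qint_num, qint_num, qint_num]
    exact zpid a b
  rcases mul_eq_zero.mp h2 with h | h
  · linear_combination h
  · exact absurd h (mul_ne_zero w_ne w_ne)


lemma qfact_ne_zero (r : ℕ) : qfact r ≠ 0 :=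
  Finset.prod_ne_zero_iff.mpr fun i _ => qint_ne_zero i

lemma qfact_succ (r : ℕ) : qfact (r+1) = qfact r * qint ((r:ℤ)+1) :=
  Finset.prod_range_succ _ r

lemma qbinom_zero (L : ℤ) : qbinom L 0 = 1 := by simp [qbinom, qfact]

lemma qbinom_mul_qfact (L : ℤ) (r : ℕ) :
    qbinom L r * qfact r = ∏ i ∈ Finset.range r, qint (L - (i : ℤ)) :=
  div_mul_cancel₀ _ (qfact_ne_zero r)

lemma prod_shift (L : ℤ) (s : ℕ) :
    ∏ i ∈ Finset.range (s+1), qint (L + 1 - (i : ℤ)) =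
      (∏ i ∈ Finset.range s, qint (L - (i : ℤ))) * qint (L+1) := by
  rw [Finset.prod_range_succ']
  congr 1
  · exact Finset.prod_congr rfl fun i _ => by push_cast; ring_nf
  · norm_num

lemma qbinom_step (L : ℤ) (s : ℕ) :
    qbinom L (s+1) * qint ((s:ℤ)+1) = qint (L - s) * qbinom L s := by
  have h : qbinom L (s+1) * qint ((s:ℤ)+1) * qfact s = qint (L - s) * qbinom L s * qfact s := by
    have h1 : qbinom L (s+1) * qint ((s:ℤ)+1) * qfact s = qbinom L (s+1) * qfact (s+1) := by
      rw [qfact_succ]; ring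
    rw [h1, qbinom_mul_qfact, Finset.prod_range_succ, mul_comm,
        mul_assoc, qbinom_mul_qfact, mul_comm]
  exact mul_right_cancel₀ (qfact_ne_zero s) h

lemma qbinom_pascal (L : ℤ) (s : ℕ) :
    qbinom (L+1) (s+1) = V^(-((s:ℤ)+1)) * qbinom L (s+1) + V^(L - s) * qbinom L s := by
  have hq : qfact (s+1) ≠ 0 := qfact_ne_zero (s+1)
  apply mul_right_cancel₀ hq
  rw [qbinom_mul_qfact, prod_shift, add_mul]
  have hL : qint (L+1) = V^(L - (s:ℤ)) * qint ((s:ℤ)+1) + V^(-((s:ℤ)+1)) * qint (L - s) := by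
    have := qint_add (L - (s:ℤ)) ((s:ℤ)+1)
    rw [show L - (s:ℤ) + ((s:ℤ)+1) = L + 1 by ring] at this
    linear_combination this
  rw [hL]
  have h1 : V^(-((s:ℤ)+1)) * qbinom L (s+1) * qfact (s+1)
      = V^(-((s:ℤ)+1)) * ((∏ i ∈ Finset.range s, qint (L - (i:ℤ))) * qint (L - s)) := by
    rw [mul_assoc, qbinom_mul_qfact, Finset.prod_range_succ]
  have h2 : V^(L-(s:ℤ)) * qbinom L s * qfact (s+1)
      = V^(L-(s:ℤ)) * ((∏ i ∈ Finset.range s, qint (L - (i:ℤ))) * qint ((s:ℤ)+1)) := by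
    rw [qfact_succ, show V^(L-(s:ℤ)) * qbinom L s * (qfact s * qint ((s:ℤ)+1))
        = V^(L-(s:ℤ)) * (qbinom L s * qfact s) * qint ((s:ℤ)+1) by ring, qbinom_mul_qfact]
    ring
  rw [h1, h2]
  ring

lemma qkey (L m : ℤ) (s : ℕ) :
    qint (m+1) * qbinom (L+1) (s+1) =
      qint (m - (s:ℤ)) * qbinom L (s+1) + qint (L + m + 1 - s) * qbinom L s := by
  have h1 : qint (m+1) = V^((s:ℤ)+1) * qint (m - s) + V^(-(m - (s:ℤ))) * qint ((s:ℤ)+1) := by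
    have := qint_add ((s:ℤ)+1) (m - s)
    rw [show (s:ℤ)+1 + (m - s) = m+1 by ring] at this
    exact this
  have h2 : qint (L + m + 1 - s) = V^(L - (s:ℤ)) * qint (m+1) + V^(-(m+1)) * qint (L - s) := by
    have := qint_add (L - (s:ℤ)) (m+1)
    rw [show (L - (s:ℤ)) + (m+1) = L + m + 1 - s by ring] at this
    exact this
  have h4 := qbinom_step L s
  have e1 : V^(-((s:ℤ)+1)) * V^((s:ℤ)+1) = 1 := by
    rw [← zpow_add₀ V_ne, show -((s:ℤ)+1) + ((s:ℤ)+1) = 0 by ring, zpow_zero]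
  have e2 : V^(-((s:ℤ)+1)) * V^(-(m - (s:ℤ))) = V^(-(m+1)) := by
    rw [← zpow_add₀ V_ne]; congr 1; ring
  rw [qbinom_pascal]
  linear_combination (V^(-((s:ℤ)+1)) * qbinom L (s+1)) * h1 - (qbinom L s) * h2
    + (V^(-(m+1))) * h4 + (qint (m - (s:ℤ)) * qbinom L (s+1)) * e1
    + (qint ((s:ℤ)+1) * qbinom L (s+1)) * e2

def cfP (m : ℕ) (r : ℕ) : RatFunc ℚ := ∏ i ∈ Finset.range r, qint ((m:ℤ) - (i:ℤ))

lemma cfP_zero (m : ℕ) : cfP m 0 = 1 := by simp [cfP]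

lemma cfP_succ (m : ℕ) (s : ℕ) : cfP m (s+1) = cfP m s * qint ((m:ℤ) - s) :=
  Finset.prod_range_succ _ s

lemma cfP_succ_top (m : ℕ) (s : ℕ) : cfP (m+1) (s+1) = qint ((m:ℤ)+1) * cfP m s := by
  rw [cfP, Finset.prod_range_succ', cfP, mul_comm]
  have h0 : qint ((((m:ℕ)+1:ℕ):ℤ) - ((0:ℕ):ℤ)) = qint ((m:ℤ)+1) := by
    norm_num
  have hp : (∏ i ∈ Finset.range s, qint ((((m:ℕ)+1:ℕ):ℤ) - ((i+1:ℕ):ℤ)))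
      = ∏ i ∈ Finset.range s, qint ((m:ℤ) - (i:ℤ)) :=
    Finset.prod_congr rfl fun i _ => congrArg qint (by push_cast; ring)
  rw [h0, hp]

lemma cfP_eq_zero {m r : ℕ} (h : m < r) : cfP m r = 0 :=
  Finset.prod_eq_zero (Finset.mem_range.mpr h) (by simp [qint_zero])

lemma qfact_eq_cfP_mul {m r : ℕ} (h : r ≤ m) : qfact m = cfP m r * qfact (m - r) := by
  induction r with
  | zero => simp [cfP_zero]
  | succ s ih =>
    have hs : s ≤ m := Nat.le_of_succ_le h
    rw [ih hs, cfP_succ]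
    have h1 : m - s = (m - (s+1)) + 1 := by omega
    rw [h1, qfact_succ]
    have h2 : ((m - (s+1) : ℕ) : ℤ) + 1 = (m:ℤ) - s := by
      have : (s:ℤ) + 1 ≤ m := by exact_mod_cast h
      omega
    rw [h2]
    ring

lemma cfP_div {m r : ℕ} (h : r ≤ m) : cfP m r = qfact m / qfact (m - r) := by
  rw [qfact_eq_cfP_mul h, mul_div_cancel_right₀ _ (qfact_ne_zero _)]

lemma key2 (L : ℤ) (m n s : ℕ) :
    (cfP (m+1) (s+1) * cfP n (s+1)) * qbinom (L+1) (s+1)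
      = (cfP m (s+1) * cfP n (s+1)) * qbinom L (s+1)
        + ((cfP m s * cfP n s) * qbinom L s) * (qint ((n:ℤ)-s) * qint (L + (m:ℤ) + 1 - s)) := by
  have hk := qkey L (m:ℤ) s
  have ha : cfP (m+1) (s+1) = qint ((m:ℤ)+1) * cfP m s := cfP_succ_top m s
  have hb : cfP m (s+1) = cfP m s * qint ((m:ℤ) - s) := cfP_succ m s
  have hc : cfP n (s+1) = cfP n s * qint ((n:ℤ) - s) := cfP_succ n s
  rw [ha, hb, hc]
  linear_combination (cfP m s * (cfP n s * qint ((n:ℤ) - s))) * hk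

section Op
variable {M : Type*} [AddCommGroup M] [Module (RatFunc ℚ) M]
variable (comp : ℤ → Submodule (RatFunc ℚ) M) (e f : Module.End (RatFunc ℚ) M)

lemma pow_mem_e (he : ∀ l : ℤ, ∀ x ∈ comp l, e x ∈ comp (l + 2)) :
    ∀ (k : ℕ) (l : ℤ) (x : M), x ∈ comp l → (e ^ k) x ∈ comp (l + 2*k) := by
  intro k
  induction k with
  | zero => intro l x hx; simpa using hx
  | succ j ih =>
    intro l x hx
    have h1 : (e ^ (j+1)) x = (e ^ j) (e x) := by
      rw [pow_succ, Module.End.mul_apply]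
    rw [h1]
    have h2 := ih (l+2) (e x) (he l x hx)
    have h3 : l + 2 + 2*(j:ℤ) = l + 2*((j:ℕ)+1:ℕ) := by push_cast; ring
    rwa [h3] at h2

lemma e_pow_f (hf : ∀ l : ℤ, ∀ x ∈ comp l, f x ∈ comp (l - 2))
    (hcomm : ∀ l : ℤ, ∀ x ∈ comp l, e (f x) - f (e x) = qint l • x) :
    ∀ (k : ℕ) (l : ℤ) (x : M), x ∈ comp l →
      e ((f ^ k) x) = (f ^ k) (e x) + (qint (k:ℤ) * qint (l - k + 1)) • (f ^ (k-1)) x := by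
  intro k
  induction k with
  | zero =>
    intro l x hx
    simp [qint_zero]
  | succ j ih =>
    intro l x hx
    have hfx : f x ∈ comp (l - 2) := hf l x hx
    have h1 : (f ^ (j+1)) x = (f ^ j) (f x) := by rw [pow_succ, Module.End.mul_apply]
    rw [h1, ih (l-2) (f x) hfx]
    have hef : e (f x) = f (e x) + qint l • x := by
      rw [← hcomm l x hx]; abel
    rw [hef, map_add, map_smul]
    have h2 : (f ^ j) (f (e x)) = (f ^ (j+1)) (e x) := by
      rw [pow_succ, Module.End.mul_apply]
    have h3 : (qint (j:ℤ) * qint (l - 2 - j + 1)) • (f ^ (j-1)) (f x)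
        = (qint (j:ℤ) * qint (l - 2 - j + 1)) • (f ^ j) x := by
      cases j with
      | zero => simp [qint_zero]
      | succ t =>
        have h4 : (f ^ (t+1-1)) (f x) = (f ^ (t+1)) x := by
          rw [Nat.succ_sub_one, pow_succ, Module.End.mul_apply]
        rw [h4]
    rw [h2, h3, Nat.succ_sub_one]
    have hq := qint_succ_mul (j:ℤ) (l - j)
    rw [show (j:ℤ) + (l - j) = l by ring] at hq
    push_cast
    rw [show l - ((j:ℤ)+1) + 1 = l - j by ring,
        show l - 2 - (j:ℤ) + 1 = l - (j:ℤ) - 1 by ring, hq, add_smul]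
    abel

lemma sum_shift_general {α : Type*} [AddCommGroup α] (n : ℕ) (A B C : ℕ → α)
    (hBn : B n = 0) (h0 : A 0 = C 0) (hstep : ∀ s, s < n → C (s+1) = A (s+1) + B s) :
    (∑ r ∈ Finset.range (n+1), A r) + (∑ r ∈ Finset.range (n+1), B r)
      = ∑ r ∈ Finset.range (n+1), C r := by
  rw [Finset.sum_range_succ B, hBn, add_zero, Finset.sum_range_succ' A, Finset.sum_range_succ' C]
  have h1 : ∑ s ∈ Finset.range n, C (s+1) = ∑ s ∈ Finset.range n, (A (s+1) + B s) :=
    Finset.sum_congr rfl fun s hs => hstep s (Finset.mem_range.mp hs)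
  rw [h1, Finset.sum_add_distrib, h0]
  abel

lemma main_formula (he : ∀ l : ℤ, ∀ x ∈ comp l, e x ∈ comp (l + 2))
    (hf : ∀ l : ℤ, ∀ x ∈ comp l, f x ∈ comp (l - 2))
    (hcomm : ∀ l : ℤ, ∀ x ∈ comp l, e (f x) - f (e x) = qint l • x)
    (n : ℕ) (l : ℤ) (x : M) (hx : x ∈ comp l) :
    ∀ m : ℕ, (e ^ m) ((f ^ n) x) =
      ∑ r ∈ Finset.range (n+1),
        ((cfP m r * cfP n r) * qbinom (l + (m:ℤ) - n) r) • (f ^ (n - r)) ((e ^ (m - r)) x) := by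
  intro m
  induction m with
  | zero =>
    have hz : ∀ r ∈ Finset.range (n+1), r ≠ 0 →
        ((cfP 0 r * cfP n r) * qbinom (l + ((0:ℕ):ℤ) - n) r) • (f ^ (n - r)) ((e ^ (0 - r)) x) = 0 := by
      intro r _ hr0
      rw [cfP_eq_zero (Nat.pos_of_ne_zero hr0)]
      simp
    rw [Finset.sum_eq_single_of_mem 0 (Finset.mem_range.mpr (Nat.succ_pos n)) hz]
    simp [cfP_zero, qbinom_zero]
  | succ m ih =>
    have hstart : (e ^ (m+1)) ((f ^ n) x) = e ((e ^ m) ((f ^ n) x)) := by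
      rw [pow_succ', Module.End.mul_apply]
    rw [hstart, ih, map_sum]
    simp only [map_smul]
    have hterm : ∀ r ∈ Finset.range (n+1),
        ((cfP m r * cfP n r) * qbinom (l + (m:ℤ) - n) r) • e ((f ^ (n - r)) ((e ^ (m - r)) x))
          = ((cfP m r * cfP n r) * qbinom (l + (m:ℤ) - n) r) • (f ^ (n - r)) ((e ^ (m + 1 - r)) x)
            + (((cfP m r * cfP n r) * qbinom (l + (m:ℤ) - n) r) *
                (qint ((n:ℤ) - r) * qint ((l + (m:ℤ) - n) + (m:ℤ) + 1 - r))) •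
                (f ^ (n - (r+1))) ((e ^ (m + 1 - (r+1))) x) := by
      intro r hr
      have hr' : r ≤ n := Nat.lt_succ_iff.mp (Finset.mem_range.mp hr)
      by_cases hrm : r ≤ m
      · have hy : (e ^ (m - r)) x ∈ comp (l + 2*((m - r : ℕ):ℤ)) :=
          pow_mem_e comp e he (m-r) l x hx
        have hEF := e_pow_f comp e f hf hcomm (n - r) (l + 2*((m-r:ℕ):ℤ)) _ hy
        rw [hEF]
        have c1 : ((n - r : ℕ):ℤ) = (n:ℤ) - r := by omega
        have c3 : l + 2*((m-r:ℕ):ℤ) - ((n-r:ℕ):ℤ) + 1 = (l + (m:ℤ) - n) + (m:ℤ) + 1 - r := by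
          omega
        have c4 : e ((e ^ (m - r)) x) = (e ^ (m + 1 - r)) x := by
          rw [show m + 1 - r = (m - r) + 1 by omega, pow_succ', Module.End.mul_apply]
        have c5 : n - r - 1 = n - (r+1) := by omega
        have c6 : m - r = m + 1 - (r+1) := by omega
        rw [c3, c1, c4, c5, c6, smul_add, smul_smul]
      · have hc : cfP m r = 0 := cfP_eq_zero (by omega)
        rw [hc]
        simp
    rw [Finset.sum_congr rfl hterm, Finset.sum_add_distrib]
    have hcast : l + ((m+1:ℕ):ℤ) - (n:ℤ) = (l + (m:ℤ) - n) + 1 := by push_cast; ring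
    simp only [hcast]
    refine sum_shift_general n _ _ _ ?_ ?_ ?_
    · simp [sub_self, qint_zero]
    · simp [cfP_zero, qbinom_zero]
    · intro s hs
      rw [key2 (l + (m:ℤ) - n) m n s, add_smul]

end Op

theorem pow_e_pow_f_commutation
    {M : Type*} [AddCommGroup M] [Module (RatFunc ℚ) M]
    (comp : ℤ → Submodule (RatFunc ℚ) M)
    (hgrading : DirectSum.IsInternal comp)
    (e f : Module.End (RatFunc ℚ) M)
    (he : ∀ l : ℤ, ∀ x ∈ comp l, e x ∈ comp (l + 2))
    (hf : ∀ l : ℤ, ∀ x ∈ comp l, f x ∈ comp (l - 2))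
    (hcomm : ∀ l : ℤ, ∀ x ∈ comp l, e (f x) - f (e x) = qint l • x)
    (m n : ℕ) (hm : 0 < m) (hn : 0 < n) (l : ℤ) (x : M) (hx : x ∈ comp l) :
    (e ^ m) ((f ^ n) x) =
      ∑ r ∈ Finset.range (min m n + 1),
        (qfact m * qfact n / (qfact (m - r) * qfact (n - r)) * qbinom (l + m - n) r) •
          (f ^ (n - r)) ((e ^ (m - r)) x) := by
  rw [main_formula comp e f he hf hcomm n l x hx m]
  have hsub : Finset.range (min m n + 1) ⊆ Finset.range (n+1) :=
    Finset.range_subset_range.mpr (by omega)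
  calc ∑ r ∈ Finset.range (n+1),
        ((cfP m r * cfP n r) * qbinom (l + (m:ℤ) - n) r) • (f ^ (n - r)) ((e ^ (m - r)) x)
      = ∑ r ∈ Finset.range (min m n + 1),
        ((cfP m r * cfP n r) * qbinom (l + (m:ℤ) - n) r) • (f ^ (n - r)) ((e ^ (m - r)) x) := by
        symm
        apply Finset.sum_subset hsub
        intro r hr hnr
        have h1 : m < r := by
          have := Finset.mem_range.mp hr
          have h2 : ¬ r < min m n + 1 := fun h => hnr (Finset.mem_range.mpr h)
          omega
        rw [cfP_eq_zero h1]
        simp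
    _ = ∑ r ∈ Finset.range (min m n + 1),
        (qfact m * qfact n / (qfact (m - r) * qfact (n - r)) * qbinom (l + m - n) r) •
          (f ^ (n - r)) ((e ^ (m - r)) x) := by
        apply Finset.sum_congr rfl
        intro r hr
        have hr' : r ≤ min m n := Nat.lt_succ_iff.mp (Finset.mem_range.mp hr)
        rw [cfP_div (le_trans hr' (min_le_left m n)), cfP_div (le_trans hr' (min_le_right m n)),
          div_mul_div_comm]

end
end

section
/- For all α, β ∈ Π, all integers m, n > 0, every μ ∈ X and every x ∈ P_𝒬(λ)_μ: if α ≠ β then ε_α^{[m]} φ_β^{[n]}(x) = φ_β^{[n]} ε_α^{[m]}(x), and if α = β then ε_α^{[m]} φ_α^{[n]}(x) = Σ_{r=0}^{min(m,n)} qbinom_α(⟨μ,α^∨⟩+m−n, r) · φ_α^{[n−r]} ε_α^{[m−r]}(x). -/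
/-!
Path model `P_𝒬(λ)` for a root system with simple roots indexed by `Pi` inside the weight
lattice `X`: `root α ∈ X` is the simple root, `pair α μ = ⟨μ,α^∨⟩`, `dd α = d_α ∈ {1,2,3}`,
`v_α = v^{d_α}`. `P_𝒬(λ)` is the `ℚ(v)`-vector space with basis the simple root paths
(lists in `Pi`), graded by `P_𝒬(λ)_μ = span{δ : ht(δ) = λ − μ}`, with operators
`φ_α` (prepending `α`), `ε_α`, and divided powers `ε_α^{[n]}`, `φ_α^{[n]}`.

STATEMENT: for `α, β ∈ Π`, `m, n > 0`, `μ ∈ X` and `x ∈ P_𝒬(λ)_μ`: if `α ≠ β` then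
`ε_α^{[m]} φ_β^{[n]}(x) = φ_β^{[n]} ε_α^{[m]}(x)`; if `α = β` then
`ε_α^{[m]} φ_α^{[n]}(x) = Σ_{r=0}^{min(m,n)} qbinom_α(⟨μ,α^∨⟩+m−n, r) · φ_α^{[n−r]} ε_α^{[m−r]}(x)`.
-/

noncomputable section

/-- `𝒵 = ℤ[v,v⁻¹]` realized as a subalgebra of `𝒬 = ℚ(v)`. -/
def ZZ : Subalgebra ℤ (RatFunc ℚ) := Algebra.adjoin ℤ {RatFunc.X, RatFunc.X⁻¹}

/-- The quantum integer `[n]_{v^d}` in `ℚ(v)`. -/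
def qd (d : ℕ) (n : ℤ) : RatFunc ℚ :=
  (RatFunc.X ^ ((d : ℤ) * n) - RatFunc.X ^ (-((d : ℤ) * n))) /
    (RatFunc.X ^ (d : ℤ) - RatFunc.X ^ (-(d : ℤ)))

/-- The quantum factorial `[r]!_{v^d}`. -/
def qfacd (d r : ℕ) : RatFunc ℚ := ∏ i ∈ Finset.range r, qd d ((i : ℤ) + 1)

/-- The quantum binomial coefficient `qbinom(n,r)` in the variable `v^d`. -/
def qbinomd (d : ℕ) (n : ℤ) (r : ℕ) : RatFunc ℚ :=
  (∏ i ∈ Finset.range r, qd d (n - (i : ℤ))) / qfacd d r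

variable {X : Type*} [AddCommGroup X] {Pi : Type*} [DecidableEq Pi]

/-- The height of a path: the sum of its entries, as an element of the weight lattice. -/
def hgt (root : Pi → X) (δ : List Pi) : X := (δ.map root).sum

/-- The operator `φ_α`: prepending `α` to a path, extended linearly. -/
def phiOp (α : Pi) : Module.End (RatFunc ℚ) (List Pi →₀ RatFunc ℚ) :=
  Finsupp.lmapDomain (RatFunc ℚ) (RatFunc ℚ) (List.cons α)

/-- `ε_α` on basis paths. -/
def epsB (root : Pi → X) (pair : Pi → X →+ ℤ) (dd : Pi → ℕ) (lam : X) (α : Pi) :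
    List Pi → (List Pi →₀ RatFunc ℚ)
  | [] => 0
  | β :: t =>
      (if β = α then Finsupp.single t (qd (dd α) (pair α (lam - hgt root t))) else 0)
        + Finsupp.mapDomain (List.cons β) (epsB root pair dd lam α t)

/-- The operator `ε_α`, the linear extension of `epsB`. -/
def epsOp (root : Pi → X) (pair : Pi → X →+ ℤ) (dd : Pi → ℕ) (lam : X) (α : Pi) :
    Module.End (RatFunc ℚ) (List Pi →₀ RatFunc ℚ) :=
  Finsupp.linearCombination (RatFunc ℚ) (epsB root pair dd lam α)

/-- The divided power `ε_α^{[n]} = ε_α^n / [n]_α!`. -/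
def epsDP (root : Pi → X) (pair : Pi → X →+ ℤ) (dd : Pi → ℕ) (lam : X) (α : Pi) (n : ℕ) :
    Module.End (RatFunc ℚ) (List Pi →₀ RatFunc ℚ) :=
  (qfacd (dd α) n)⁻¹ • (epsOp root pair dd lam α) ^ n

/-- The divided power `φ_α^{[n]} = φ_α^n / [n]_α!`. -/
def phiDP (dd : Pi → ℕ) (α : Pi) (n : ℕ) :
    Module.End (RatFunc ℚ) (List Pi →₀ RatFunc ℚ) :=
  (qfacd (dd α) n)⁻¹ • (phiOp α) ^ n

/-- `ε_γ = ε_{γ₁} ∘ ⋯ ∘ ε_{γ_m}` for a path `γ`. -/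
def epsPath (root : Pi → X) (pair : Pi → X →+ ℤ) (dd : Pi → ℕ) (lam : X) (γ : List Pi) :
    Module.End (RatFunc ℚ) (List Pi →₀ RatFunc ℚ) :=
  (γ.map (epsOp root pair dd lam)).prod

/-- `φ_γ = φ_{γ₁} ∘ ⋯ ∘ φ_{γ_m}` for a path `γ`. -/
def phiPath (γ : List Pi) : Module.End (RatFunc ℚ) (List Pi →₀ RatFunc ℚ) :=
  (γ.map phiOp).prod

open Classical in
/-- The value `b_λ(δ,γ)` on basis paths. -/
def bentryQ (root : Pi → X) (pair : Pi → X →+ ℤ) (dd : Pi → ℕ) (lam : X) (δ γ : List Pi) :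
    RatFunc ℚ :=
  if hgt root δ = hgt root γ then
    (epsPath root pair dd lam δ.reverse (Finsupp.single γ 1)) [] else 0

/-- The bilinear form `b_λ` on `P_𝒬(λ)`. -/
def bformQ (root : Pi → X) (pair : Pi → X →+ ℤ) (dd : Pi → ℕ) (lam : X)
    (x y : List Pi →₀ RatFunc ℚ) : RatFunc ℚ :=
  x.sum fun δ cδ => y.sum fun γ cγ => cδ * cγ * bentryQ root pair dd lam δ γ

/-- Length of the initial run of `α`'s in a list. -/
def runLen (α : Pi) : List Pi → ℕ
  | [] => 0
  | β :: t => if β = α then runLen α t + 1 else 0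

/-- The scalar `δ^!`, a product of quantum factorials of run lengths. -/
def pfact (dd : Pi → ℕ) : List Pi → RatFunc ℚ
  | [] => 1
  | α :: t => qd (dd α) ((runLen α t : ℤ) + 1) * pfact dd t

/-- The normalized basis element `⟨δ⟩ = (1/δ^!)·δ`. -/
def nbasis (dd : Pi → ℕ) (δ : List Pi) : List Pi →₀ RatFunc ℚ :=
  (pfact dd δ)⁻¹ • Finsupp.single δ 1

/-- The lattice `P_𝒵(λ)`: the set of `𝒵`-linear combinations of the `⟨δ⟩`. -/
def latticeP (dd : Pi → ℕ) : Set (List Pi →₀ RatFunc ℚ) :=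
  {x | ∃ (s : Finset (List Pi)) (c : List Pi → RatFunc ℚ),
      (∀ δ, c δ ∈ ZZ) ∧ x = ∑ δ ∈ s, c δ • nbasis dd δ}

/-- The weight space `P_𝒬(λ)_μ`, spanned by the paths of height `λ - μ`. -/
def PQcomp (root : Pi → X) (lam μ : X) : Submodule (RatFunc ℚ) (List Pi →₀ RatFunc ℚ) :=
  Submodule.span (RatFunc ℚ)
    {p | ∃ δ : List Pi, hgt root δ = lam - μ ∧ p = Finsupp.single δ 1}



abbrev RQ := RatFunc ℚ

lemma X_pow_ne_one {k : ℕ} (hk : k ≠ 0) : (RatFunc.X : RQ) ^ k ≠ 1 := by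
  intro h
  have h2 : (algebraMap (Polynomial ℚ) RQ) (Polynomial.X ^ k) = (algebraMap (Polynomial ℚ) RQ) 1 := by
    simp [map_pow, h]
  have h3 := RatFunc.algebraMap_injective ℚ h2
  have := congrArg Polynomial.natDegree h3
  simp [Polynomial.natDegree_X_pow] at this
  exact hk this

lemma X_zpow_ne_one {k : ℤ} (hk : k ≠ 0) : (RatFunc.X : RQ) ^ k ≠ 1 := by
  rcases k.lt_or_lt_of_ne hk with h | h
  · intro he
    have : ((RatFunc.X : RQ) ^ (-k))⁻¹ = 1 := by
      rw [← zpow_neg]; simpa using he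
    have h1 : (RatFunc.X : RQ) ^ (-k) = 1 := by
      rw [inv_eq_one] at this; exact this
    have : (RatFunc.X : RQ) ^ (-k).toNat = 1 := by
      rw [← zpow_natCast, Int.toNat_of_nonneg (by omega)]; exact h1
    exact X_pow_ne_one (by omega) this
  · intro he
    have : (RatFunc.X : RQ) ^ k.toNat = 1 := by
      rw [← zpow_natCast, Int.toNat_of_nonneg (by omega)]; exact he
    exact X_pow_ne_one (by omega) this

lemma sub_zpow_ne {k : ℤ} (hk : k ≠ 0) : (RatFunc.X : RQ) ^ k - RatFunc.X ^ (-k) ≠ 0 := by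
  intro h
  rw [sub_eq_zero] at h
  have h2 : (RatFunc.X : RQ) ^ k * RatFunc.X ^ k = RatFunc.X ^ (-k) * RatFunc.X ^ k := by rw [h]
  rw [← zpow_add₀ RatFunc.X_ne_zero, ← zpow_add₀ RatFunc.X_ne_zero, neg_add_cancel, zpow_zero] at h2
  exact X_zpow_ne_one (by omega) h2

lemma qd_ne_zero {d : ℕ} (hd : d ≠ 0) {n : ℤ} (hn : n ≠ 0) : qd d n ≠ 0 := by
  apply div_ne_zero
  · exact sub_zpow_ne (by positivity)
  · exact sub_zpow_ne (by exact_mod_cast hd)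

lemma qd_zero (d : ℕ) : qd d 0 = 0 := by simp [qd]

lemma qd_one {d : ℕ} (hd : d ≠ 0) : qd d 1 = 1 := by
  rw [qd, mul_one, div_self (sub_zpow_ne (by exact_mod_cast hd))]

lemma qd_eq (d : ℕ) (n : ℤ) :
    qd d n = (((RatFunc.X : RQ) ^ (d:ℤ)) ^ n - (((RatFunc.X : RQ) ^ (d:ℤ)) ^ n)⁻¹) /
      ((RatFunc.X : RQ) ^ (d:ℤ) - ((RatFunc.X : RQ) ^ (d:ℤ))⁻¹) := by
  rw [qd, zpow_neg, zpow_neg, zpow_mul]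

lemma qd_I2 {d : ℕ} (hd : d ≠ 0) (p b r : ℤ) :
    qd d (p - r) * qd d (b - r) + qd d r * qd d (p + b - r) = qd d p * qd d b := by
  have hu : (RatFunc.X : RQ) ^ (d:ℤ) ≠ 0 := zpow_ne_zero _ RatFunc.X_ne_zero
  have hD : (RatFunc.X : RQ) ^ (d:ℤ) - ((RatFunc.X : RQ) ^ (d:ℤ))⁻¹ ≠ 0 := by
    rw [← zpow_neg]; exact sub_zpow_ne (by exact_mod_cast hd)
  set u := (RatFunc.X : RQ) ^ (d:ℤ) with hudef
  have hP : u ^ p ≠ 0 := zpow_ne_zero _ hu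
  have hB : u ^ b ≠ 0 := zpow_ne_zero _ hu
  have hR : u ^ r ≠ 0 := zpow_ne_zero _ hu
  have key : (u^(p-r) - (u^(p-r))⁻¹) * (u^(b-r) - (u^(b-r))⁻¹)
      + (u^r - (u^r)⁻¹) * (u^(p+b-r) - (u^(p+b-r))⁻¹)
      = (u^p - (u^p)⁻¹) * (u^b - (u^b)⁻¹) := by
    simp only [zpow_sub₀ hu, zpow_add₀ hu]
    set P := u^p with hPd
    set B := u^b with hBd
    set R := u^r with hRd
    clear_value P B R
    field_simp
    have c1 : P * P⁻¹ = 1 := mul_inv_cancel₀ hP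
    have c2 : B * B⁻¹ = 1 := mul_inv_cancel₀ hB
    have c3 : R * R⁻¹ = 1 := mul_inv_cancel₀ hR
    linear_combination
  simp only [qd_eq, ← hudef, div_mul_div_comm, ← add_div, key]

lemma qfacd_zero (d : ℕ) : qfacd d 0 = 1 := by simp [qfacd]

lemma qfacd_succ (d r : ℕ) : qfacd d (r+1) = qfacd d r * qd d ((r:ℤ)+1) := by
  rw [qfacd, Finset.prod_range_succ]; rfl

lemma qfacd_ne_zero {d : ℕ} (hd : d ≠ 0) (r : ℕ) : qfacd d r ≠ 0 := by
  rw [qfacd]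
  apply Finset.prod_ne_zero_iff.2
  intro i _
  exact qd_ne_zero hd (by omega)

lemma qbinomd_zero (d : ℕ) (a : ℤ) : qbinomd d a 0 = 1 := by
  simp [qbinomd, qfacd_zero]

lemma qd_I1 {d : ℕ} (hd : d ≠ 0) (n t : ℤ) :
    qd d (n+1) * qd d (t-n) = qd d t + qd d n * qd d (t-n-1) := by
  have h := qd_I2 hd (n+1) (t-n) 1
  rw [qd_one hd, one_mul, show n+1-1 = n from by ring, show (n+1)+(t-n)-1 = t from by ring,
    show t-n-1 = t-n-1 from rfl] at h
  linear_combination -h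

lemma qbinom_pascal_s4 {d : ℕ} (hd : d ≠ 0) (a : ℤ) (m s : ℕ) :
    qd d ((m:ℤ)+1) * qbinomd d (a+1) (s+1) =
      qd d ((m:ℤ)-(s:ℤ)) * qbinomd d a (s+1) + qd d (a+(m:ℤ)+1-(s:ℤ)) * qbinomd d a s := by
  have hFs : qfacd d s ≠ 0 := qfacd_ne_zero hd s
  have hq : qd d ((s:ℤ)+1) ≠ 0 := qd_ne_zero hd (by omega)
  have hF1 : qfacd d (s+1) ≠ 0 := qfacd_ne_zero hd (s+1)
  have hA : (∏ i ∈ Finset.range (s+1), qd d (a+1 - (i:ℤ)))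
      = (∏ i ∈ Finset.range s, qd d (a - (i:ℤ))) * qd d (a+1) := by
    rw [Finset.prod_range_succ']
    congr 1
    · apply Finset.prod_congr rfl
      intro i _
      congr 1
      push_cast
      ring
    · norm_num
  have hB : (∏ i ∈ Finset.range (s+1), qd d (a - (i:ℤ)))
      = (∏ i ∈ Finset.range s, qd d (a - (i:ℤ))) * qd d (a - (s:ℤ)) := Finset.prod_range_succ _ _
  set Ps := ∏ i ∈ Finset.range s, qd d (a - (i:ℤ)) with hPs
  apply mul_right_cancel₀ hF1
  rw [qbinomd, qbinomd, qbinomd, hA, hB]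
  rw [add_mul, mul_assoc, mul_assoc, div_mul_cancel₀ _ hF1, mul_assoc, div_mul_cancel₀ _ hF1]
  rw [qfacd_succ]
  rw [show Ps / qfacd d s * (qfacd d s * qd d ((s:ℤ)+1)) = Ps * qd d ((s:ℤ)+1) from by
    field_simp]
  have h := qd_I2 hd ((m:ℤ)+1) (a+1) ((s:ℤ)+1)
  rw [show (m:ℤ)+1-((s:ℤ)+1) = (m:ℤ)-(s:ℤ) from by ring,
      show a+1-((s:ℤ)+1) = a-(s:ℤ) from by ring,
      show (m:ℤ)+1+(a+1)-((s:ℤ)+1) = a+(m:ℤ)+1-(s:ℤ) from by ring] at h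
  push_cast
  linear_combination (-Ps) * h

-- auxiliary
def SH (root : Pi → X) (ν : X) : Submodule (RatFunc ℚ) (List Pi →₀ RatFunc ℚ) :=
  Submodule.span (RatFunc ℚ) {p | ∃ δ : List Pi, hgt root δ = ν ∧ p = Finsupp.single δ 1}

lemma PQcomp_eq_SH (root : Pi → X) (lam μ : X) : PQcomp root lam μ = SH root (lam - μ) := rfl

section Ops

variable (root : Pi → X) (pair : Pi → X →+ ℤ) (dd : Pi → ℕ) (lam : X)

lemma hgt_nil : hgt root ([] : List Pi) = 0 := rfl

lemma hgt_cons (β : Pi) (δ : List Pi) : hgt root (β :: δ) = root β + hgt root δ := by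
  simp [hgt]

lemma phiOp_apply (β : Pi) (x : List Pi →₀ RatFunc ℚ) :
    phiOp β x = Finsupp.mapDomain (List.cons β) x := rfl

lemma phiOp_single (β : Pi) (δ : List Pi) (c : RatFunc ℚ) :
    phiOp β (Finsupp.single δ c) = Finsupp.single (β :: δ) c := by
  rw [phiOp_apply, Finsupp.mapDomain_single]

lemma epsOp_single (α : Pi) (δ : List Pi) (c : RatFunc ℚ) :
    epsOp root pair dd lam α (Finsupp.single δ c) = c • epsB root pair dd lam α δ := by
  rw [epsOp, Finsupp.linearCombination_single]

lemma SH_phi (α : Pi) (ν : X) (x : List Pi →₀ RatFunc ℚ) (hx : x ∈ SH root ν) :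
    phiOp α x ∈ SH root (root α + ν) := by
  refine Submodule.span_induction ?_ ?_ ?_ ?_ hx
  · rintro p ⟨δ, hδ, rfl⟩
    rw [phiOp_single]
    exact Submodule.subset_span ⟨α :: δ, by rw [hgt_cons, hδ], rfl⟩
  · simp
  · intro y z _ _ hy hz
    rw [map_add]; exact Submodule.add_mem _ hy hz
  · intro c y _ hy
    rw [map_smul]; exact Submodule.smul_mem _ _ hy

lemma epsB_mem (α : Pi) (δ : List Pi) :
    epsB root pair dd lam α δ ∈ SH root (hgt root δ - root α) := by
  induction δ with
  | nil => simp [epsB]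
  | cons β t ih =>
    rw [epsB]
    apply Submodule.add_mem
    · by_cases hβ : β = α
      · rw [if_pos hβ, hβ]
        have : Finsupp.single t (qd (dd α) ((pair α) (lam - hgt root t)))
            = (qd (dd α) ((pair α) (lam - hgt root t))) • Finsupp.single t (1 : RatFunc ℚ) := by
          rw [Finsupp.smul_single, smul_eq_mul, mul_one]
        rw [this]
        apply Submodule.smul_mem
        apply Submodule.subset_span
        exact ⟨t, by rw [hgt_cons]; abel, rfl⟩
      · rw [if_neg hβ]; exact Submodule.zero_mem _
    · rw [← phiOp_apply]
      have := SH_phi root β _ _ ih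
      have he : root β + (hgt root t - root α) = hgt root (β :: t) - root α := by
        rw [hgt_cons]; abel
      rwa [he] at this

lemma SH_eps (α : Pi) (ν : X) (x : List Pi →₀ RatFunc ℚ) (hx : x ∈ SH root ν) :
    epsOp root pair dd lam α x ∈ SH root (ν - root α) := by
  refine Submodule.span_induction ?_ ?_ ?_ ?_ hx
  · rintro p ⟨δ, hδ, rfl⟩
    rw [epsOp_single, one_smul, ← hδ]
    exact epsB_mem root pair dd lam α δ
  · simp
  · intro y z _ _ hy hz
    rw [map_add]; exact Submodule.add_mem _ hy hz
  · intro c y _ hy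
    rw [map_smul]; exact Submodule.smul_mem _ _ hy

lemma comm_ne {α β : Pi} (hab : α ≠ β) :
    Commute (epsOp root pair dd lam α) (phiOp β) := by
  have : (epsOp root pair dd lam α) * (phiOp β) = (phiOp β) * (epsOp root pair dd lam α) := by
    apply Finsupp.lhom_ext
    intro δ c
    show epsOp root pair dd lam α (phiOp β (Finsupp.single δ c))
        = phiOp β (epsOp root pair dd lam α (Finsupp.single δ c))
    rw [phiOp_single, epsOp_single, epsOp_single, epsB, if_neg (fun h => hab h.symm),
      zero_add, map_smul, phiOp_apply]
  exact this

lemma comm1 (α : Pi) (ν : X) (x : List Pi →₀ RatFunc ℚ) (hx : x ∈ SH root ν) :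
    epsOp root pair dd lam α (phiOp α x)
      = qd (dd α) (pair α (lam - ν)) • x + phiOp α (epsOp root pair dd lam α x) := by
  refine Submodule.span_induction ?_ ?_ ?_ ?_ hx
  · rintro p ⟨δ, hδ, rfl⟩
    rw [phiOp_single, epsOp_single, one_smul, epsB, if_pos rfl, epsOp_single, one_smul,
      hδ, ← phiOp_apply]
    congr 1
    rw [Finsupp.smul_single, smul_eq_mul, mul_one]
  · simp
  · intro y z _ _ hy hz
    rw [map_add, map_add, hy, hz, map_add, map_add, smul_add]
    abel
  · intro c y _ hy
    rw [map_smul, map_smul, hy, map_smul, map_smul, smul_add, smul_comm]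

end Ops

section Ops2

variable (root : Pi → X) (pair : Pi → X →+ ℤ) (dd : Pi → ℕ) (lam : X)

lemma commA (α : Pi) (hdα : dd α ≠ 0) (hps : pair α (root α) = 2) :
    ∀ (n : ℕ) (ν : X) (x : List Pi →₀ RatFunc ℚ), x ∈ SH root ν →
    epsOp root pair dd lam α (((phiOp α)^(n+1) : Module.End (RatFunc ℚ) _) x)
      = ((phiOp α)^(n+1) : Module.End (RatFunc ℚ) _) (epsOp root pair dd lam α x)
        + (qd (dd α) ((n:ℤ)+1) * qd (dd α) (pair α (lam - ν) - n)) •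
            (((phiOp α)^n : Module.End (RatFunc ℚ) _) x) := by
  intro n
  induction n with
  | zero =>
    intro ν x hx
    rw [pow_one, pow_zero, Module.End.one_apply]
    rw [comm1 root pair dd lam α ν x hx]
    norm_num [qd_one hdα]
    abel
  | succ n ih =>
    intro ν x hx
    have hFx : phiOp α x ∈ SH root (root α + ν) := SH_phi root α ν x hx
    have ht' : pair α (lam - (root α + ν)) = pair α (lam - ν) - 2 := by
      rw [show lam - (root α + ν) = (lam - ν) - root α from by abel, map_sub, hps]
    have e1 : ((phiOp α)^(n+2) : Module.End (RatFunc ℚ) (List Pi →₀ RatFunc ℚ)) x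
        = ((phiOp α)^(n+1) : Module.End (RatFunc ℚ) _) (phiOp α x) := by
      rw [pow_succ]; rfl
    have e2 : ((phiOp α)^(n+1) : Module.End (RatFunc ℚ) (List Pi →₀ RatFunc ℚ)) x
        = ((phiOp α)^n : Module.End (RatFunc ℚ) _) (phiOp α x) := by
      rw [pow_succ]; rfl
    rw [e1, ih (root α + ν) (phiOp α x) hFx, ht']
    rw [comm1 root pair dd lam α ν x hx]
    rw [map_add, map_smul, ← e2]
    have e3 : ((phiOp α)^(n+1) : Module.End (RatFunc ℚ) (List Pi →₀ RatFunc ℚ))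
        (phiOp α (epsOp root pair dd lam α x))
        = ((phiOp α)^(n+2) : Module.End (RatFunc ℚ) _) (epsOp root pair dd lam α x) := by
      rw [pow_succ]; rfl
    rw [e3]
    have key : qd (dd α) (pair α (lam - ν))
        + qd (dd α) ((n:ℤ)+1) * qd (dd α) (pair α (lam - ν) - 2 - n)
        = qd (dd α) ((n:ℤ)+1+1) * qd (dd α) (pair α (lam - ν) - (n+1)) := by
      have h := qd_I1 hdα ((n:ℤ)+1) (pair α (lam - ν))
      rw [show pair α (lam - ν) - ((n:ℤ)+1) - 1 = pair α (lam - ν) - 2 - n from by ring,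
        show pair α (lam - ν) - ((n:ℤ)+1) = pair α (lam - ν) - (n+1) from by ring] at h
      linear_combination -h
    push_cast
    rw [← key, add_smul]
    abel

lemma eps_epsDP (α : Pi) (hdα : dd α ≠ 0) (k : ℕ) (z : List Pi →₀ RatFunc ℚ) :
    epsOp root pair dd lam α (epsDP root pair dd lam α k z)
      = qd (dd α) ((k:ℤ)+1) • epsDP root pair dd lam α (k+1) z := by
  rw [epsDP, epsDP, qfacd_succ]
  rw [LinearMap.smul_apply, LinearMap.smul_apply, map_smul, smul_smul]
  have e : epsOp root pair dd lam α (((epsOp root pair dd lam α)^k : Module.End (RatFunc ℚ) _) z)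
      = ((epsOp root pair dd lam α)^(k+1) : Module.End (RatFunc ℚ) _) z := by
    rw [pow_succ']; rfl
  rw [e]
  congr 1
  have h1 : qfacd (dd α) k ≠ 0 := qfacd_ne_zero hdα k
  have h2 : qd (dd α) ((k:ℤ)+1) ≠ 0 := qd_ne_zero hdα (by omega)
  field_simp

lemma commA' (α : Pi) (hdα : dd α ≠ 0) (hps : pair α (root α) = 2)
    (n : ℕ) (ν : X) (x : List Pi →₀ RatFunc ℚ) (hx : x ∈ SH root ν) :
    epsOp root pair dd lam α (phiDP dd α (n+1) x)
      = phiDP dd α (n+1) (epsOp root pair dd lam α x)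
        + qd (dd α) (pair α (lam - ν) - n) • phiDP dd α n x := by
  simp only [phiDP, LinearMap.smul_apply, map_smul]
  rw [commA root pair dd lam α hdα hps n ν x hx,
    smul_add, smul_smul, smul_smul]
  congr 2
  rw [qfacd_succ]
  have h1 : qfacd (dd α) n ≠ 0 := qfacd_ne_zero hdα n
  have h2 : qd (dd α) ((n:ℤ)+1) ≠ 0 := qd_ne_zero hdα (by omega)
  field_simp

lemma phiDP_zero (α : Pi) : phiDP dd α 0 = 1 := by
  rw [phiDP, qfacd_zero, pow_zero, inv_one, one_smul]

lemma epsDP_zero (α : Pi) : epsDP root pair dd lam α 0 = 1 := by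
  rw [epsDP, qfacd_zero, pow_zero, inv_one, one_smul]

lemma SH_pow_eps (α : Pi) : ∀ (k : ℕ) (ν : X) (x : List Pi →₀ RatFunc ℚ), x ∈ SH root ν →
    ((epsOp root pair dd lam α)^k : Module.End (RatFunc ℚ) _) x ∈ SH root (ν - k • root α) := by
  intro k
  induction k with
  | zero => intro ν x hx; simpa using hx
  | succ k ih =>
    intro ν x hx
    have e : ((epsOp root pair dd lam α)^(k+1) : Module.End (RatFunc ℚ) _) x
        = epsOp root pair dd lam α (((epsOp root pair dd lam α)^k : Module.End (RatFunc ℚ) _) x) := by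
      rw [pow_succ']; rfl
    rw [e]
    have h2 := SH_eps root pair dd lam α _ _ (ih ν x hx)
    have he : ν - k • root α - root α = ν - (k+1) • root α := by
      rw [succ_nsmul]; abel
    rwa [he] at h2

lemma SH_epsDP (α : Pi) (k : ℕ) (ν : X) (x : List Pi →₀ RatFunc ℚ) (hx : x ∈ SH root ν) :
    epsDP root pair dd lam α k x ∈ SH root (ν - k • root α) := by
  rw [epsDP, LinearMap.smul_apply]
  exact Submodule.smul_mem _ _ (SH_pow_eps root pair dd lam α k ν x hx)

end Ops2

section Main

variable (root : Pi → X) (pair : Pi → X →+ ℤ) (dd : Pi → ℕ) (lam : X)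

lemma pair_shift (α : Pi) (hps : pair α (root α) = 2) (ν : X) (k : ℕ) :
    pair α (lam - (ν - k • root α)) = pair α (lam - ν) + 2 * k := by
  have h : lam - (ν - k • root α) = (lam - ν) + k • root α := by abel
  rw [h, map_add, map_nsmul, hps, nsmul_eq_mul]
  push_cast
  ring

lemma step_term (α : Pi) (hdα : dd α ≠ 0) (hps : pair α (root α) = 2)
    (m n r : ℕ) (hrm : r ≤ m) (hrn : r ≤ n) (ν : X)
    (x : List Pi →₀ RatFunc ℚ) (hx : x ∈ SH root ν) :
    epsOp root pair dd lam α (phiDP dd α (n-r) (epsDP root pair dd lam α (m-r) x))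
      = qd (dd α) ((m:ℤ)-r+1) • phiDP dd α (n-r) (epsDP root pair dd lam α (m-r+1) x)
        + (if r < n then qd (dd α) (pair α (lam-ν) + (m:ℤ) - n + m + 1 - r) else 0) •
            phiDP dd α (n-r-1) (epsDP root pair dd lam α (m-r) x) := by
  have hy : epsDP root pair dd lam α (m-r) x ∈ SH root (ν - (m-r) • root α) :=
    SH_epsDP root pair dd lam α (m-r) ν x hx
  have hEy : epsOp root pair dd lam α (epsDP root pair dd lam α (m-r) x)
      = qd (dd α) ((m:ℤ)-r+1) • epsDP root pair dd lam α (m-r+1) x := by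
    rw [eps_epsDP root pair dd lam α hdα (m-r) x]
    congr 2
    rw [Nat.cast_sub hrm]
  by_cases hr : r < n
  · obtain ⟨k, hk⟩ : ∃ k, n - r = k + 1 := ⟨n - r - 1, by omega⟩
    rw [if_pos hr, hk]
    rw [commA' root pair dd lam α hdα hps k _ _ hy]
    rw [hEy, map_smul]
    rw [pair_shift root pair lam α hps ν (m-r), Nat.cast_sub hrm,
      show k + 1 - 1 = k from rfl,
      show (pair α) (lam - ν) + 2 * ((m:ℤ) - r) - k
          = (pair α) (lam - ν) + m - n + m + 1 - r from by
        have : (k : ℤ) = (n:ℤ) - r - 1 := by omega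
        rw [this]; ring]
  · rw [if_neg hr]
    have hrn' : n - r = 0 := by omega
    rw [hrn', phiDP_zero, Module.End.one_apply, Module.End.one_apply, hEy, zero_smul, add_zero]

end Main

section Main2

variable (root : Pi → X) (pair : Pi → X →+ ℤ) (dd : Pi → ℕ) (lam : X)

lemma regroup {d : ℕ} (hd : d ≠ 0) (a : ℤ) (m K : ℕ) (T : ℕ → (List Pi →₀ RatFunc ℚ)) :
    (∑ s ∈ Finset.range (K+1), (qbinomd d a s * qd d ((m:ℤ)+1-s)) • T s)
      + (∑ j ∈ Finset.range K, (qbinomd d a j * qd d (a+(m:ℤ)+1-j)) • T (j+1))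
    = ∑ s ∈ Finset.range (K+1), (qd d ((m:ℤ)+1) * qbinomd d (a+1) s) • T s := by
  rw [Finset.sum_range_succ' (fun s => (qbinomd d a s * qd d ((m:ℤ)+1-s)) • T s) K,
    Finset.sum_range_succ' (fun s => (qd d ((m:ℤ)+1) * qbinomd d (a+1) s) • T s) K]
  rw [add_right_comm, ← Finset.sum_add_distrib]
  congr 1
  · apply Finset.sum_congr rfl
    intro j _
    rw [← add_smul]
    congr 1
    have hp := qbinom_pascal_s4 hd a m j
    rw [show ((m:ℤ)+1-(↑(j+1):ℤ)) = (m:ℤ)-(j:ℤ) from by push_cast; ring]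
    linear_combination -hp
  · rw [qbinomd_zero, qbinomd_zero, mul_one, one_mul]
    norm_num

end Main2

section Main3

variable (root : Pi → X) (pair : Pi → X →+ ℤ) (dd : Pi → ℕ) (lam : X)

lemma mainB (α : Pi) (hdα : dd α ≠ 0) (hps : pair α (root α) = 2) :
    ∀ (m n : ℕ) (ν : X) (x : List Pi →₀ RatFunc ℚ), x ∈ SH root ν →
    epsDP root pair dd lam α m (phiDP dd α n x)
      = ∑ r ∈ Finset.range (min m n + 1),
          qbinomd (dd α) (pair α (lam - ν) + (m:ℤ) - n) r •
            phiDP dd α (n - r) (epsDP root pair dd lam α (m - r) x) := by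
  intro m
  induction m with
  | zero =>
    intro n ν x hx
    rw [show min 0 n = 0 from min_eq_left (Nat.zero_le n), Finset.sum_range_one]
    simp only [Nat.sub_zero]
    rw [qbinomd_zero, one_smul, epsDP_zero, Module.End.one_apply, Module.End.one_apply]
  | succ m ih =>
    intro n ν x hx
    have hq1 : qd (dd α) ((m:ℤ)+1) ≠ 0 := qd_ne_zero hdα (by omega)
    have hstep : epsDP root pair dd lam α (m+1) (phiDP dd α n x)
        = (qd (dd α) ((m:ℤ)+1))⁻¹ •
            epsOp root pair dd lam α (epsDP root pair dd lam α m (phiDP dd α n x)) := by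
      rw [eps_epsDP root pair dd lam α hdα m _, smul_smul,
        inv_mul_cancel₀ hq1, one_smul]
    rw [hstep, ih n ν x hx, map_sum,
      show pair α (lam-ν) + (↑(m+1):ℤ) - n = (pair α (lam - ν) + (m:ℤ) - n) + 1 from by
        push_cast; ring]
    simp only [map_smul]
    have h1 : ∀ r ∈ Finset.range (min m n + 1),
        qbinomd (dd α) (pair α (lam - ν) + (m:ℤ) - n) r •
          epsOp root pair dd lam α (phiDP dd α (n-r) (epsDP root pair dd lam α (m-r) x))
        = (qbinomd (dd α) (pair α (lam - ν) + (m:ℤ) - n) r * qd (dd α) ((m:ℤ)+1-r)) •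
            phiDP dd α (n-r) (epsDP root pair dd lam α (m+1-r) x)
          + (if r < n then
              (qbinomd (dd α) (pair α (lam - ν) + (m:ℤ) - n) r *
                qd (dd α) ((pair α (lam - ν) + (m:ℤ) - n)+(m:ℤ)+1-r)) else 0) •
            phiDP dd α (n-(r+1)) (epsDP root pair dd lam α (m+1-(r+1)) x) := by
      intro r hr
      rw [Finset.mem_range] at hr
      have hrm : r ≤ m := by omega
      have hrn : r ≤ n := by omega
      rw [step_term root pair dd lam α hdα hps m n r hrm hrn ν x hx, smul_add, smul_smul,
        smul_smul,
        show (m:ℤ)-r+1 = (m:ℤ)+1-r from by ring,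
        show m-r+1 = m+1-r from by omega,
        show pair α (lam-ν) + (m:ℤ) - n + m + 1 - r
          = (pair α (lam - ν) + (m:ℤ) - n)+(m:ℤ)+1-r from by ring,
        show n-r-1 = n-(r+1) from by omega,
        show m-r = m+1-(r+1) from by omega,
        mul_ite, mul_zero]
    rw [Finset.sum_congr rfl h1, Finset.sum_add_distrib]
    rcases Nat.lt_or_ge m n with hmn | hmn
    · rw [show min m n = m from by omega, show min (m+1) n = m+1 from by omega]
      have ext1 : ∑ r ∈ Finset.range (m+1+1),
            (qbinomd (dd α) (pair α (lam - ν) + (m:ℤ) - n) r * qd (dd α) ((m:ℤ)+1-r)) •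
              phiDP dd α (n-r) (epsDP root pair dd lam α (m+1-r) x)
          = ∑ r ∈ Finset.range (m+1),
            (qbinomd (dd α) (pair α (lam - ν) + (m:ℤ) - n) r * qd (dd α) ((m:ℤ)+1-r)) •
              phiDP dd α (n-r) (epsDP root pair dd lam α (m+1-r) x) := by
        rw [Finset.sum_range_succ,
          show (m:ℤ)+1-(↑(m+1):ℤ) = 0 from by push_cast; ring, qd_zero, mul_zero,
          zero_smul, add_zero]
      have g2 : ∑ r ∈ Finset.range (m+1),
            (if r < n then
              (qbinomd (dd α) (pair α (lam - ν) + (m:ℤ) - n) r *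
                qd (dd α) ((pair α (lam - ν) + (m:ℤ) - n)+(m:ℤ)+1-r)) else 0) •
              phiDP dd α (n-(r+1)) (epsDP root pair dd lam α (m+1-(r+1)) x)
          = ∑ r ∈ Finset.range (m+1),
            (qbinomd (dd α) (pair α (lam - ν) + (m:ℤ) - n) r *
                qd (dd α) ((pair α (lam - ν) + (m:ℤ) - n)+(m:ℤ)+1-r)) •
              phiDP dd α (n-(r+1)) (epsDP root pair dd lam α (m+1-(r+1)) x) := by
        apply Finset.sum_congr rfl
        intro r hr
        rw [Finset.mem_range] at hr
        rw [if_pos (by omega)]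
      rw [← ext1, g2,
        regroup hdα (pair α (lam - ν) + (m:ℤ) - n) m (m+1)
          (fun s => phiDP dd α (n-s) (epsDP root pair dd lam α (m+1-s) x)),
        Finset.smul_sum]
      apply Finset.sum_congr rfl
      intro s _
      rw [smul_smul, ← mul_assoc, inv_mul_cancel₀ hq1, one_mul]
    · rw [show min m n = n from by omega, show min (m+1) n = n from by omega]
      have g2 : ∑ r ∈ Finset.range (n+1),
            (if r < n then
              (qbinomd (dd α) (pair α (lam - ν) + (m:ℤ) - n) r *
                qd (dd α) ((pair α (lam - ν) + (m:ℤ) - n)+(m:ℤ)+1-r)) else 0) •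
              phiDP dd α (n-(r+1)) (epsDP root pair dd lam α (m+1-(r+1)) x)
          = ∑ r ∈ Finset.range n,
            (qbinomd (dd α) (pair α (lam - ν) + (m:ℤ) - n) r *
                qd (dd α) ((pair α (lam - ν) + (m:ℤ) - n)+(m:ℤ)+1-r)) •
              phiDP dd α (n-(r+1)) (epsDP root pair dd lam α (m+1-(r+1)) x) := by
        rw [Finset.sum_range_succ, if_neg (by omega), zero_smul, add_zero]
        apply Finset.sum_congr rfl
        intro r hr
        rw [Finset.mem_range] at hr
        rw [if_pos (by omega)]
      rw [g2,
        regroup hdα (pair α (lam - ν) + (m:ℤ) - n) m n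
          (fun s => phiDP dd α (n-s) (epsDP root pair dd lam α (m+1-s) x)),
        Finset.smul_sum]
      apply Finset.sum_congr rfl
      intro s _
      rw [smul_smul, ← mul_assoc, inv_mul_cancel₀ hq1, one_mul]

end Main3


variable (root : Pi → X) (pair : Pi → X →+ ℤ) (dd : Pi → ℕ)

theorem divided_power_commutation
    (hd : ∀ α, dd α ∈ ({1, 2, 3} : Set ℕ))
    (hsym : ∀ α β, (dd α : ℤ) * pair α (root β) = (dd β : ℤ) * pair β (root α))
    (hpairself : ∀ α, pair α (root α) = 2)
    (lam : X) (α β : Pi) (m n : ℕ) (hm : 0 < m) (hn : 0 < n) (μ : X)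
    (x : List Pi →₀ RatFunc ℚ) (hx : x ∈ PQcomp root lam μ) :
    (α ≠ β →
      epsDP root pair dd lam α m (phiDP dd β n x) =
        phiDP dd β n (epsDP root pair dd lam α m x)) ∧
    (α = β →
      epsDP root pair dd lam α m (phiDP dd α n x) =
        ∑ r ∈ Finset.range (min m n + 1),
          qbinomd (dd α) (pair α μ + (m : ℤ) - (n : ℤ)) r •
            phiDP dd α (n - r) (epsDP root pair dd lam α (m - r) x)) := by
  have hdα : dd α ≠ 0 := by
    have := hd α
    simp only [Set.mem_insert_iff, Set.mem_singleton_iff] at this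
    rcases this with h | h | h <;> omega
  constructor
  · intro hne
    have key : ((epsOp root pair dd lam α)^m : Module.End (RatFunc ℚ) _)
          (((phiOp β)^n : Module.End (RatFunc ℚ) _) x)
        = ((phiOp β)^n : Module.End (RatFunc ℚ) _)
          (((epsOp root pair dd lam α)^m : Module.End (RatFunc ℚ) _) x) := by
      have hc := (comm_ne root pair dd lam hne).pow_pow m n
      calc ((epsOp root pair dd lam α)^m : Module.End (RatFunc ℚ) _)
            (((phiOp β)^n : Module.End (RatFunc ℚ) _) x)
          = (((epsOp root pair dd lam α)^m) * ((phiOp β)^n)) x := rfl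
        _ = (((phiOp β)^n) * ((epsOp root pair dd lam α)^m)) x := by rw [hc]
        _ = _ := rfl
    simp only [epsDP, phiDP, LinearMap.smul_apply, map_smul]
    rw [key, smul_comm]
  · intro _
    have h := mainB root pair dd lam α hdα (hpairself α) m n (lam - μ) x hx
    rwa [show lam - (lam - μ) = μ from by abel] at h


end
end

section
/- Let l ≥ 1 be an integer such that l does not divide 2d_α for any α ∈ Π. Then for every F ∈ 𝒵[X] and all λ, γ ∈ X, the l-th cyclotomic polynomial σ_l divides F(λ + lγ) − F(λ) in ℤ[v,v⁻¹]. -/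
/-!
Context: `Π` indexes the simple roots of a root system with weight lattice `X`;
`pair α : X →+ ℤ` is `μ ↦ ⟨μ,α^∨⟩`, `root : Π → X` realizes the simple roots in `X`,
and `d α ∈ {1,2,3}` are the symmetrizers. Work in `𝒬 = ℚ(v)` (as `RatFunc ℚ`, `v = RatFunc.X`);
`𝒵 = ℤ[v,v⁻¹]` is the subalgebra generated by `v, v⁻¹`; `qd d n = [n]_{v^d}`.
`𝒵[X]` is the `𝒵`-subalgebra of functions `X → 𝒬` (with values in `𝒵`) generated by the
functions `μ ↦ [f(μ)]_α` for group homomorphisms `f : X →+ ℤ` and `α ∈ Π`.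
`σ_l` is the `l`-th cyclotomic polynomial.

STATEMENT: if `l ≥ 1` divides no `2·d α`, then for every `F ∈ 𝒵[X]` and all `λ, γ ∈ X`,
`σ_l` divides `F(λ + lγ) − F(λ)` in `ℤ[v,v⁻¹]`.
-/

noncomputable section

/-- The `l`-th cyclotomic polynomial `σ_l`, regarded as an element of `ℚ(v)`. -/
def cycl (l : ℕ) : RatFunc ℚ := Polynomial.aeval RatFunc.X (Polynomial.cyclotomic l ℤ)

namespace CycloAux

lemma hv0 : (RatFunc.X : RatFunc ℚ) ≠ 0 := RatFunc.X_ne_zero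

lemma hvmem : (RatFunc.X : RatFunc ℚ) ∈ ZZ :=
  Algebra.subset_adjoin (Set.mem_insert _ _)

lemma hvinvmem : (RatFunc.X : RatFunc ℚ)⁻¹ ∈ ZZ :=
  Algebra.subset_adjoin (Set.mem_insert_of_mem _ rfl)

lemma zpow_mem_ZZ (a : ℤ) : (RatFunc.X : RatFunc ℚ) ^ a ∈ ZZ := by
  cases a with
  | ofNat k =>
    rw [Int.ofNat_eq_natCast, zpow_natCast]
    exact pow_mem hvmem k
  | negSucc k =>
    rw [zpow_negSucc, ← inv_pow]
    exact pow_mem hvinvmem _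

lemma aeval_mem_ZZ (p : Polynomial ℤ) :
    Polynomial.aeval (RatFunc.X : RatFunc ℚ) p ∈ ZZ := by
  induction p using Polynomial.induction_on' with
  | add p q hp hq => rw [map_add]; exact add_mem hp hq
  | monomial n a =>
    rw [Polynomial.aeval_monomial]
    exact mul_mem (ZZ.algebraMap_mem a) (pow_mem hvmem n)

lemma aeval_eq (p : Polynomial ℤ) :
    Polynomial.aeval (RatFunc.X : RatFunc ℚ) p
      = algebraMap (Polynomial ℚ) (RatFunc ℚ) (p.map (Int.castRingHom ℚ)) := by
  induction p using Polynomial.induction_on' with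
  | add p q hp hq => rw [map_add, Polynomial.map_add, map_add, hp, hq]
  | monomial n a =>
    rw [Polynomial.aeval_monomial, Polynomial.map_monomial,
      ← Polynomial.C_mul_X_pow_eq_monomial, map_mul, map_pow, RatFunc.algebraMap_C,
      RatFunc.algebraMap_X]
    simp

lemma aeval_injective :
    Function.Injective fun p : Polynomial ℤ => Polynomial.aeval (RatFunc.X : RatFunc ℚ) p := by
  intro p q h
  simp only [aeval_eq] at h
  exact Polynomial.map_injective _ Int.cast_injective (RatFunc.algebraMap_injective ℚ h)

lemma rep {x : RatFunc ℚ} (hx : x ∈ ZZ) :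
    ∃ (N : ℕ) (p : Polynomial ℤ),
      (RatFunc.X : RatFunc ℚ) ^ N * x = Polynomial.aeval RatFunc.X p := by
  induction hx using Algebra.adjoin_induction with
  | mem y hy =>
    rcases hy with rfl | rfl
    · exact ⟨0, Polynomial.X, by simp⟩
    · exact ⟨1, 1, by simp [mul_inv_cancel₀ hv0]⟩
  | algebraMap r => exact ⟨0, Polynomial.C r, by simp⟩
  | add x y hx hy ihx ihy =>
    obtain ⟨N, p, hp⟩ := ihx; obtain ⟨M, q, hq⟩ := ihy
    refine ⟨N + M, Polynomial.X ^ M * p + Polynomial.X ^ N * q, ?_⟩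
    rw [map_add, map_mul, map_mul, map_pow, map_pow, Polynomial.aeval_X, ← hp, ← hq]
    ring
  | mul x y hx hy ihx ihy =>
    obtain ⟨N, p, hp⟩ := ihx; obtain ⟨M, q, hq⟩ := ihy
    exact ⟨N + M, p * q, by rw [map_mul, ← hp, ← hq]; ring⟩

lemma delta_ne {d : ℕ} (hd : 1 ≤ d) :
    (RatFunc.X : RatFunc ℚ) ^ (d : ℤ) - RatFunc.X ^ (-(d : ℤ)) ≠ 0 := by
  rw [sub_ne_zero]
  intro h
  have h2 : (RatFunc.X : RatFunc ℚ) ^ ((d : ℤ) + (d : ℤ)) = 1 := by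
    rw [zpow_add₀ hv0]
    nth_rewrite 1 [h]
    rw [← zpow_add₀ hv0, neg_add_cancel, zpow_zero]
  have h3 : (RatFunc.X : RatFunc ℚ) ^ (2 * d) = 1 := by
    have e : ((2 * d : ℕ) : ℤ) = (d : ℤ) + d := by push_cast; ring
    rw [← zpow_natCast, e, h2]
  rw [← RatFunc.algebraMap_X (K := ℚ), ← map_pow,
    ← map_one (algebraMap (Polynomial ℚ) (RatFunc ℚ))] at h3
  have h4 := RatFunc.algebraMap_injective ℚ h3
  have hdeg := congrArg Polynomial.natDegree h4
  simp [Polynomial.natDegree_X_pow] at hdeg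
  omega

lemma qd_mul {d : ℕ} (hd : 1 ≤ d) (n : ℤ) :
    qd d n * ((RatFunc.X : RatFunc ℚ) ^ (d : ℤ) - RatFunc.X ^ (-(d : ℤ)))
      = RatFunc.X ^ ((d : ℤ) * n) - RatFunc.X ^ (-((d : ℤ) * n)) :=
  div_mul_cancel₀ _ (delta_ne hd)

lemma qd_neg (d : ℕ) (n : ℤ) : qd d (-n) = - qd d n := by
  rw [qd, qd, mul_neg, neg_neg, ← neg_div, neg_sub]

lemma qd_sum {d : ℕ} (hd : 1 ≤ d) (n : ℕ) :
    qd d (n : ℤ)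
      = ∑ i ∈ Finset.range n, (RatFunc.X : RatFunc ℚ) ^ ((d : ℤ) * ((n : ℤ) - 1 - 2 * i)) := by
  rw [qd, div_eq_iff (delta_ne hd)]
  have key : ∀ i ∈ Finset.range n,
      (RatFunc.X : RatFunc ℚ) ^ ((d : ℤ) * ((n : ℤ) - 1 - 2 * i))
          * ((RatFunc.X : RatFunc ℚ) ^ (d : ℤ) - RatFunc.X ^ (-(d : ℤ)))
        = (fun j : ℕ => (RatFunc.X : RatFunc ℚ) ^ ((d : ℤ) * ((n : ℤ) - 2 * j))) i
          - (fun j : ℕ => (RatFunc.X : RatFunc ℚ) ^ ((d : ℤ) * ((n : ℤ) - 2 * j))) (i + 1) := by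
    intro i _
    simp only
    rw [mul_sub, ← zpow_add₀ hv0, ← zpow_add₀ hv0]
    have e1 : (d : ℤ) * ((n : ℤ) - 1 - 2 * i) + (d : ℤ) = (d : ℤ) * ((n : ℤ) - 2 * i) := by ring
    have e2 : (d : ℤ) * ((n : ℤ) - 1 - 2 * i) + (-(d : ℤ))
        = (d : ℤ) * ((n : ℤ) - 2 * ((i + 1 : ℕ) : ℤ)) := by push_cast; ring
    rw [e1, e2]
  rw [Finset.sum_mul, Finset.sum_congr rfl key, Finset.sum_range_sub']
  congr 1 <;> congr 1 <;> push_cast <;> ring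

lemma qd_mem {d : ℕ} (hd : 1 ≤ d) (n : ℤ) : qd d n ∈ ZZ := by
  obtain ⟨m, rfl | rfl⟩ := n.eq_nat_or_neg
  · rw [qd_sum hd]
    exact sum_mem fun i _ => zpow_mem_ZZ _
  · rw [qd_neg]
    exact neg_mem (by rw [qd_sum hd]; exact sum_mem fun i _ => zpow_mem_ZZ _)

lemma cycl_dvd_int {l : ℕ} (hl : 1 ≤ l) {k : ℤ} (hk : (l : ℤ) ∣ k) :
    ∃ z ∈ ZZ, (RatFunc.X : RatFunc ℚ) ^ k - 1 = cycl l * z := by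
  have hnat : ∀ m : ℕ, l ∣ m → ∃ z ∈ ZZ, (RatFunc.X : RatFunc ℚ) ^ (m : ℤ) - 1 = cycl l * z := by
    intro m hm
    obtain ⟨j, rfl⟩ := hm
    have h1 : Polynomial.cyclotomic l ℤ ∣ Polynomial.X ^ (l * j) - 1 := by
      refine (Polynomial.cyclotomic.dvd_X_pow_sub_one l ℤ).trans ?_
      have h2 := sub_dvd_pow_sub_pow (Polynomial.X ^ l : Polynomial ℤ) 1 j
      simpa [← pow_mul, one_pow] using h2
    obtain ⟨t, ht⟩ := h1
    refine ⟨Polynomial.aeval RatFunc.X t, aeval_mem_ZZ t, ?_⟩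
    have h3 := congrArg (Polynomial.aeval (RatFunc.X : RatFunc ℚ)) ht
    simp only [map_sub, map_mul, map_pow, map_one, Polynomial.aeval_X] at h3
    rw [zpow_natCast]
    rw [show Polynomial.aeval (RatFunc.X : RatFunc ℚ) (Polynomial.cyclotomic l ℤ) = cycl l
      from rfl] at h3
    exact h3
  rcases le_or_gt 0 k with h | h
  · lift k to ℕ using h
    exact hnat k (Int.natCast_dvd_natCast.mp hk)
  · have hknn : (((-k).toNat : ℕ) : ℤ) = -k := Int.toNat_of_nonneg (by omega)
    have hdvd : l ∣ (-k).toNat := by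
      apply Int.natCast_dvd_natCast.mp
      rw [hknn]
      exact (dvd_neg).mpr hk
    obtain ⟨z, hz, he⟩ := hnat (-k).toNat hdvd
    rw [hknn] at he
    refine ⟨-(RatFunc.X ^ k) * z, mul_mem (neg_mem (zpow_mem_ZZ k)) hz, ?_⟩
    have hid : (RatFunc.X : RatFunc ℚ) ^ k - 1
        = -(RatFunc.X ^ k) * ((RatFunc.X : RatFunc ℚ) ^ (-k) - 1) := by
      rw [neg_mul, mul_sub, ← zpow_add₀ hv0, add_neg_cancel, zpow_zero]
      ring
    rw [hid, he]
    ring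

lemma field_id {K : Type*} [Field K] {x : K} (hx : x ≠ 0) (a b c : ℤ) :
    (x ^ (a + c) - x ^ (-(a + c)) - x ^ a + x ^ (-a)) * x ^ b
      = (x ^ c - 1) * (x ^ (a + b) + x ^ (b - a - c)) := by
  have ha : x ^ a ≠ 0 := zpow_ne_zero a hx
  have hb : x ^ b ≠ 0 := zpow_ne_zero b hx
  have hc : x ^ c ≠ 0 := zpow_ne_zero c hx
  simp only [neg_add, zpow_add₀ hx, zpow_sub₀ hx, zpow_neg]
  field_simp
  ring

lemma key_dvd {d l : ℕ} (hd : 1 ≤ d) (hl : 1 ≤ l) (hnd : ¬ (l ∣ 2 * d)) (n m : ℤ) :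
    ∃ z ∈ ZZ, qd d (n + (l : ℤ) * m) - qd d n = cycl l * z := by
  set v : RatFunc ℚ := RatFunc.X with hv
  set a : ℤ := (d : ℤ) * n with ha
  set b : ℤ := (d : ℤ) with hb
  set c : ℤ := (d : ℤ) * ((l : ℤ) * m) with hc
  set G : RatFunc ℚ := qd d (n + (l : ℤ) * m) - qd d n with hG
  have hGmem : G ∈ ZZ := sub_mem (qd_mem hd _) (qd_mem hd _)
  obtain ⟨z₁, hz₁mem, hz₁⟩ := cycl_dvd_int hl (k := c) ⟨(d : ℤ) * m, by rw [hc]; ring⟩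
  set w : RatFunc ℚ := z₁ * (v ^ (a + b) + v ^ (b - a - c)) with hw
  have hwmem : w ∈ ZZ := mul_mem hz₁mem (add_mem (zpow_mem_ZZ _) (zpow_mem_ZZ _))
  have hdelta : (v ^ (d : ℤ) - v ^ (-(d : ℤ))) * v ^ (d : ℤ) = v ^ (2 * d) - 1 := by
    rw [sub_mul, ← zpow_add₀ hv0, ← zpow_add₀ hv0, neg_add_cancel, zpow_zero]
    have e : (d : ℤ) + (d : ℤ) = ((2 * d : ℕ) : ℤ) := by push_cast; ring
    rw [e, zpow_natCast]
  have hid : G * (v ^ (2 * d) - 1) = cycl l * w := by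
    have q1 : qd d (n + (l : ℤ) * m) * (v ^ (d : ℤ) - v ^ (-(d : ℤ)))
        = v ^ (a + c) - v ^ (-(a + c)) := by
      have e : (d : ℤ) * (n + (l : ℤ) * m) = a + c := by rw [ha, hc]; ring
      rw [qd_mul hd, e]
    have q2 : qd d n * (v ^ (d : ℤ) - v ^ (-(d : ℤ))) = v ^ a - v ^ (-a) := by
      rw [qd_mul hd]
    calc G * (v ^ (2 * d) - 1)
        = (G * (v ^ (d : ℤ) - v ^ (-(d : ℤ)))) * v ^ (d : ℤ) := by rw [mul_assoc, hdelta]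
      _ = (v ^ (a + c) - v ^ (-(a + c)) - v ^ a + v ^ (-a)) * v ^ b := by
          rw [hG, sub_mul, q1, q2, hb]; ring
      _ = (v ^ c - 1) * (v ^ (a + b) + v ^ (b - a - c)) := field_id hv0 a b c
      _ = cycl l * w := by rw [hz₁, hw]; ring
  obtain ⟨N, p, hp⟩ := rep hGmem
  obtain ⟨M, q, hq⟩ := rep hwmem
  have hpoly : (Polynomial.X : Polynomial ℤ) ^ M * (p * (Polynomial.X ^ (2 * d) - 1))
      = Polynomial.cyclotomic l ℤ * (Polynomial.X ^ N * q) := by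
    apply aeval_injective
    simp only [map_mul, map_sub, map_pow, map_one, Polynomial.aeval_X]
    rw [show Polynomial.aeval (RatFunc.X : RatFunc ℚ) (Polynomial.cyclotomic l ℤ) = cycl l
      from rfl, ← hv, ← hp, ← hq]
    calc v ^ M * (v ^ N * G * (v ^ (2 * d) - 1))
        = v ^ M * v ^ N * (G * (v ^ (2 * d) - 1)) := by ring
      _ = v ^ M * v ^ N * (cycl l * w) := by rw [hid]
      _ = cycl l * (v ^ N * (v ^ M * w)) := by ring
  have hP : Prime (Polynomial.cyclotomic l ℤ) :=
    UniqueFactorizationMonoid.irreducible_iff_prime.mp (Polynomial.cyclotomic.irreducible (n := l) (by omega))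
  have hl0 : l ≠ 0 := by omega
  set ζ : ℂ := Complex.exp (2 * Real.pi * Complex.I / l) with hζdef
  have hζ : IsPrimitiveRoot ζ l := Complex.isPrimitiveRoot_exp l hl0
  have hroot : Polynomial.aeval ζ (Polynomial.cyclotomic l ℤ) = 0 := by
    have h5 := hζ.isRoot_cyclotomic (show 0 < l by omega)
    rw [Polynomial.IsRoot] at h5
    rw [Polynomial.aeval_def, Polynomial.eval₂_eq_eval_map]
    rw [show (algebraMap ℤ ℂ) = Int.castRingHom ℂ from rfl, Polynomial.map_cyclotomic]
    exact h5
  have hPX : ¬ Polynomial.cyclotomic l ℤ ∣ (Polynomial.X : Polynomial ℤ) := by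
    rintro ⟨t, ht⟩
    have h6 := congrArg (Polynomial.aeval ζ) ht
    simp only [map_mul, Polynomial.aeval_X, hroot, zero_mul] at h6
    exact hζ.ne_zero hl0 h6
  have hP2d : ¬ Polynomial.cyclotomic l ℤ ∣ (Polynomial.X ^ (2 * d) - 1 : Polynomial ℤ) := by
    rintro ⟨t, ht⟩
    have h7 := congrArg (Polynomial.aeval ζ) ht
    simp only [map_sub, map_mul, map_pow, map_one, Polynomial.aeval_X, hroot, zero_mul] at h7
    have h8 : ζ ^ (2 * d) = 1 := by
      have := sub_eq_zero.mp h7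
      linear_combination this
    exact hnd (hζ.dvd_of_pow_eq_one _ h8)
  have hdvd : Polynomial.cyclotomic l ℤ ∣ p := by
    have h1 : Polynomial.cyclotomic l ℤ
        ∣ Polynomial.X ^ M * (p * (Polynomial.X ^ (2 * d) - 1)) := ⟨_, hpoly⟩
    rcases hP.2.2 _ _ h1 with h | h
    · exact absurd (hP.dvd_of_dvd_pow h) hPX
    rcases hP.2.2 _ _ h with h | h
    · exact h
    · exact absurd h hP2d
  obtain ⟨t, rfl⟩ := hdvd
  refine ⟨(RatFunc.X)⁻¹ ^ N * Polynomial.aeval RatFunc.X t,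
    mul_mem (pow_mem hvinvmem N) (aeval_mem_ZZ t), ?_⟩
  have hXN : (v : RatFunc ℚ) ^ N ≠ 0 := pow_ne_zero _ hv0
  rw [map_mul, show Polynomial.aeval (RatFunc.X : RatFunc ℚ) (Polynomial.cyclotomic l ℤ) = cycl l
    from rfl] at hp
  have hGe : G = v⁻¹ ^ N * (v ^ N * G) := by
    rw [← mul_assoc, inv_pow, inv_mul_cancel₀ hXN, one_mul]
  show G = _
  rw [hGe, hp, ← hv]
  ring

end CycloAux

theorem cyclotomic_dvd_quantum_polynomial_periodicity
    (X : Type*) [AddCommGroup X] (Pi : Type*) [Fintype Pi]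
    (root : Pi → X) (pair : Pi → X →+ ℤ) (d : Pi → ℕ)
    (hd : ∀ α, d α ∈ ({1, 2, 3} : Set ℕ))
    (hsym : ∀ α β, (d α : ℤ) * pair α (root β) = (d β : ℤ) * pair β (root α))
    (hpairself : ∀ α, pair α (root α) = 2)
    (l : ℕ) (hl : 1 ≤ l) (hnd : ∀ α, ¬ (l ∣ 2 * d α))
    (F : X → RatFunc ℚ)
    (hF : F ∈ Algebra.adjoin ZZ
      {g : X → RatFunc ℚ | ∃ (f : X →+ ℤ) (α : Pi), g = fun μ => qd (d α) (f μ)})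
    (lam γ : X) :
    ∃ z ∈ ZZ, F (lam + l • γ) - F lam = cycl l * z := by
  have main : (∀ μ, F μ ∈ ZZ) ∧
      ∀ lam' : X, ∃ z ∈ ZZ, F (lam' + l • γ) - F lam' = cycl l * z := by
    induction hF using Algebra.adjoin_induction with
    | mem g hg =>
      obtain ⟨f, α, rfl⟩ := hg
      have hdα : 1 ≤ d α := by
        have h := hd α
        simp only [Set.mem_insert_iff, Set.mem_singleton_iff] at h
        omega
      refine ⟨fun μ => CycloAux.qd_mem hdα _, fun lam' => ?_⟩
      have hmap : f (lam' + l • γ) = f lam' + (l : ℤ) * f γ := by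
        rw [map_add, map_nsmul, nsmul_eq_mul]
      obtain ⟨z, hz, he⟩ := CycloAux.key_dvd hdα hl (hnd α) (f lam') (f γ)
      exact ⟨z, hz, by simpa [hmap] using he⟩
    | algebraMap r =>
      refine ⟨fun μ => ?_, fun lam' => ⟨0, zero_mem _, ?_⟩⟩
      · show algebraMap (↥ZZ) (RatFunc ℚ) r ∈ ZZ
        exact r.2
      · rw [mul_zero, sub_eq_zero]; rfl
    | add x y hx hy ihx ihy =>
      refine ⟨fun μ => add_mem (ihx.1 μ) (ihy.1 μ), fun lam' => ?_⟩
      obtain ⟨z₁, h₁, e₁⟩ := ihx.2 lam'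
      obtain ⟨z₂, h₂, e₂⟩ := ihy.2 lam'
      refine ⟨z₁ + z₂, add_mem h₁ h₂, ?_⟩
      simp only [_root_.Pi.add_apply]
      rw [mul_add, ← e₁, ← e₂]
      ring
    | mul x y hx hy ihx ihy =>
      refine ⟨fun μ => mul_mem (ihx.1 μ) (ihy.1 μ), fun lam' => ?_⟩
      obtain ⟨z₁, h₁, e₁⟩ := ihx.2 lam'
      obtain ⟨z₂, h₂, e₂⟩ := ihy.2 lam'
      refine ⟨x (lam' + l • γ) * z₂ + y lam' * z₁,
        add_mem (mul_mem (ihx.1 _) h₂) (mul_mem (ihy.1 _) h₁), ?_⟩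
      simp only [_root_.Pi.mul_apply]
      have hr : x (lam' + l • γ) * y (lam' + l • γ) - x lam' * y lam'
          = x (lam' + l • γ) * (y (lam' + l • γ) - y lam')
            + y lam' * (x (lam' + l • γ) - x lam') := by ring
      rw [hr, e₁, e₂]
      ring
  exact main.2 lam


end
end
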